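/- Let c ≠ 0 be a real number and let x : ℝ → ℝ be twice differentiable with x''(t) + c·x'(t) = 0 for all t, x(0) = x₀, x'(0) = v₀, and set A₁ = x₀ + v₀/c. Define the Hamiltonian Ĥ(q, p) = p²/2 − c²·q²/2 + c²·A₁·q and the total energy E(t) = (1/2)·x'(t)² + ∫₀ᵗ c·x'(s)² ds (kinetic energy plus the work done against the damping force). Then for all t ∈ ℝ, Ĥ(x(t), x'(t)) − E(t) = c²·A₁·x₀ − c²·x₀²/2; that is, the value of the Hamiltonian of the substitute conservative system equals the total energy of the damped system up to an additive constant depending only on the initial condition. -/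

import Mathlib

theorem stmt_5 (c : ℝ) (hc : c ≠ 0) (x : ℝ → ℝ) (x₀ v₀ A₁ : ℝ)
    (hx : Differentiable ℝ x) (hx' : Differentiable ℝ (deriv x))
    (hode : ∀ t : ℝ, deriv (deriv x) t + c * deriv x t = 0)
    (h0 : x 0 = x₀) (h0' : deriv x 0 = v₀)
    (hA₁ : A₁ = x₀ + v₀ / c)
    (H : ℝ → ℝ → ℝ)
    (hH : ∀ q p : ℝ, H q p = p ^ 2 / 2 - c ^ 2 * q ^ 2 / 2 + c ^ 2 * A₁ * q)
    (E : ℝ → ℝ)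
    (hE : ∀ t : ℝ, E t = (1 / 2) * (deriv x t) ^ 2 + ∫ s in (0:ℝ)..t, c * (deriv x s) ^ 2) :
    ∀ t : ℝ, H (x t) (deriv x t) - E t = c ^ 2 * A₁ * x₀ - c ^ 2 * x₀ ^ 2 / 2 := by
  -- c * x + x' is constant
  have hg : Differentiable ℝ (fun t => c * x t + deriv x t) :=
    (hx.const_mul c).add hx'
  have hconst : ∀ t : ℝ, c * x t + deriv x t = c * x 0 + deriv x 0 := by
    intro t
    apply is_const_of_deriv_eq_zero hg
    intro s
    have : deriv (fun t => c * x t + deriv x t) s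
        = c * deriv x s + deriv (deriv x) s := by
      rw [deriv_fun_add ((hx.const_mul c).differentiableAt) (hx'.differentiableAt),
        deriv_const_mul _ hx.differentiableAt]
    rw [this]
    linarith [hode s]
  have key : ∀ t : ℝ, deriv x t = c * (A₁ - x t) := by
    intro t
    have h := hconst t
    rw [h0, h0'] at h
    have : A₁ * c = x₀ * c + v₀ := by
      rw [hA₁]; field_simp
    nlinarith [h]
  -- antiderivative of the integrand
  set φ : ℝ → ℝ := fun t => c ^ 2 * A₁ * x t - c ^ 2 * (x t) ^ 2 / 2 with hφ
  have hderiv : ∀ t : ℝ, HasDerivAt φ (c * (deriv x t) ^ 2) t := by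
    intro t
    have hxd : HasDerivAt x (deriv x t) t := (hx t).hasDerivAt
    have h1 : HasDerivAt φ (c ^ 2 * A₁ * deriv x t - c ^ 2 * (2 * x t * deriv x t) / 2) t := by
      simpa using ((hxd.const_mul (c ^ 2 * A₁)).fun_sub
        (((hxd.pow 2).const_mul (c ^ 2)).div_const 2))
    convert h1 using 1
    rw [key t]; ring
  have hcont : Continuous (deriv x) := hx'.continuous
  have hint : ∀ t : ℝ, (∫ s in (0:ℝ)..t, c * (deriv x s) ^ 2) = φ t - φ 0 := by
    intro t
    exact intervalIntegral.integral_eq_sub_of_hasDerivAt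
      (fun s _ => hderiv s)
      ((continuous_const.mul (hcont.pow 2)).intervalIntegrable 0 t)
  intro t
  rw [hH, hE, hint]
  simp only [hφ, h0]
  ring
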